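/- Two-stage screening preserves the BH result (basis of the dependence correction of Section 5.1): let 0 < α* ≤ α < 1, let R = r_BH(α), and let T = {p ∈ C : p < R·α/m} be the multiset of the p-values selected at level α (so |T| = R). Then applying the step-up search to T with thresholds relative to the full count m, i.e., max{i ∈ {1,…,R} : p_(i:T) < i·α*/m} (0 if none), equals r_BH(α*), and {p ∈ T : p < r_BH(α*)·α*/m} equals the BH rejection set of C at level α*. -/

import Mathlib

open scoped Classical

/-- `#S(t)`: the number of elements of the multiset `C` that are strictly less than `t`. -/
noncomputable def countBelow (C : Multiset ℝ) (t : ℝ) : ℕ :=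
  (C.filter (fun p => p < t)).card

/-- The `k`-th smallest element (1-indexed order statistic, with multiplicity) of `D`. -/
noncomputable def orderStat (D : Multiset ℝ) (k : ℕ) : ℝ :=
  (D.sort (· ≤ ·)).getD (k - 1) 0

/-- The Benjamini–Hochberg index at level `α`:
`max {i ∈ {1,…,m} : p_(i) < i·α/m}`, with value `0` if this set is empty. -/
noncomputable def rBH (α : ℝ) (C : Multiset ℝ) : ℕ :=
  ((Finset.Icc 1 C.card).filter
    (fun i => orderStat C i < (i : ℝ) * α / (C.card : ℝ))).sup id

lemma sorted_filter_eq_take (L : List ℝ) (hL : L.Pairwise (· ≤ ·)) (t : ℝ) :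
    L.filter (fun p => decide (p < t)) = L.take (L.countP (fun p => decide (p < t))) := by
  induction L with
  | nil => simp
  | cons a L ih =>
    rcases lt_or_ge a t with h | h
    · simp [List.filter_cons, List.countP_cons, h, ih (hL.of_cons)]
    · have hall : ∀ x ∈ a :: L, ¬ x < t := by
        intro x hx
        rcases List.mem_cons.mp hx with rfl | hx
        · exact not_lt.mpr h
        · exact not_lt.mpr (le_trans h (List.rel_of_pairwise_cons hL hx))
      have h0 : (a :: L).countP (fun p => decide (p < t)) = 0 := by
        rw [List.countP_eq_zero]
        intro x hx; simpa using hall x hx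
      have h1 : (a :: L).filter (fun p => decide (p < t)) = [] := by
        rw [List.filter_eq_nil_iff]
        intro x hx; simpa using hall x hx
      simp [h0, h1]

lemma countBelow_eq_countP (C : Multiset ℝ) (t : ℝ) :
    countBelow C t = (C.sort (· ≤ ·)).countP (fun p => decide (p < t)) := by
  unfold countBelow
  rw [List.countP_eq_length_filter]
  conv_lhs => rw [← Multiset.sort_eq C (· ≤ ·), Multiset.filter_coe, Multiset.coe_card]

lemma orderStat_lt_iff (C : Multiset ℝ) (t : ℝ) (k : ℕ) (hk1 : 1 ≤ k) (hk2 : k ≤ C.card) :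
    orderStat C k < t ↔ k ≤ countBelow C t := by
  set L := C.sort (· ≤ ·) with hLdefL
  have hs : L.Pairwise (· ≤ ·) := Multiset.pairwise_sort _ _
  have hlen : L.length = C.card := Multiset.length_sort _
  have hklen : k - 1 < L.length := by omega
  rw [countBelow_eq_countP]
  have hOS : orderStat C k = L[k-1] := List.getD_eq_getElem L 0 hklen
  constructor
  · intro h
    have htake : (L.take k).countP (fun p => decide (p < t)) = k := by
      rw [List.countP_eq_length.mpr, List.length_take]
      · omega
      · intro x hx
        rw [List.mem_take_iff_getElem] at hx
        obtain ⟨j, hj, rfl⟩ := hx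
        have hle : L[j] ≤ L[k-1] := by
          rcases eq_or_lt_of_le (by omega : j ≤ k - 1) with h' | h'
          · exact le_of_eq (by congr 1)
          · have := List.Pairwise.rel_get_of_lt hs (a := ⟨j, by omega⟩) (b := ⟨k-1, hklen⟩) h'
            simpa [List.get_eq_getElem] using this
        simp only [decide_eq_true_eq]
        exact lt_of_le_of_lt hle (hOS ▸ h)
    calc k = (L.take k).countP _ := htake.symm
      _ ≤ L.countP _ := (List.take_sublist k L).countP_le
  · intro h
    set c := L.countP (fun p => decide (p < t)) with hc
    have hkc : k - 1 < c := by omega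
    have hfil := sorted_filter_eq_take L hs t
    have hmem : L[k-1] ∈ L.filter (fun p => decide (p < t)) := by
      rw [hfil]
      have : (L.take c)[k-1]'(by rw [List.length_take]; omega) = L[k-1] := by
        rw [List.getElem_take]
      rw [← this]
      exact List.getElem_mem _
    rw [hOS]
    simpa using (List.mem_filter.mp hmem).2

lemma sup_id_mem {s : Finset ℕ} (h : s.Nonempty) : s.sup id ∈ s := by
  have := Finset.max'_mem s h
  rwa [Finset.max', Finset.sup'_eq_sup] at this

lemma countBelow_le_card (C : Multiset ℝ) (t : ℝ) : countBelow C t ≤ C.card :=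
  Multiset.card_le_card (Multiset.filter_le _ _)

lemma rBH_le_card (α : ℝ) (C : Multiset ℝ) : rBH α C ≤ C.card := by
  apply Finset.sup_le
  intro j hj
  exact (Finset.mem_Icc.mp (Finset.mem_filter.mp hj).1).2

lemma rBH_mem (α : ℝ) (C : Multiset ℝ) (h : rBH α C ≠ 0) :
    rBH α C ∈ (Finset.Icc 1 C.card).filter
      (fun i => orderStat C i < (i : ℝ) * α / (C.card : ℝ)) := by
  apply sup_id_mem
  rw [Finset.nonempty_iff_ne_empty]
  intro he
  exact h (by rw [rBH, he, Finset.sup_empty]; rfl)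

lemma countBelow_rBH (C : Multiset ℝ) (α : ℝ) (hα : 0 < α)
    (hC : ∀ p ∈ C, 0 ≤ p) :
    countBelow C ((rBH α C : ℝ) * α / (C.card : ℝ)) = rBH α C := by
  set m := C.card with hmdef
  set R := rBH α C with hRdef
  rcases Nat.eq_zero_or_pos R with hR0 | hR1
  · rw [hR0]
    simp only [Nat.cast_zero, zero_mul, zero_div]
    unfold countBelow
    rw [Multiset.card_eq_zero, Multiset.filter_eq_nil]
    intro p hp
    exact not_lt.mpr (hC p hp)
  · have hmem := rBH_mem α C (by omega)
    rw [← hRdef, Finset.mem_filter, Finset.mem_Icc] at hmem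
    obtain ⟨⟨h1R, hRm⟩, hcond⟩ := hmem
    have hge : R ≤ countBelow C ((R : ℝ) * α / (m : ℝ)) :=
      (orderStat_lt_iff C _ R h1R hRm).mp hcond
    rcases eq_or_lt_of_le hge with h | h
    · exact h.symm
    · exfalso
      have hcle : countBelow C ((R : ℝ) * α / (m : ℝ)) ≤ m := countBelow_le_card C _
      have hR1m : R + 1 ≤ m := by omega
      have hos : orderStat C (R + 1) < ((R + 1 : ℕ) : ℝ) * α / (m : ℝ) := by
        have := (orderStat_lt_iff C ((R : ℝ) * α / (m : ℝ)) (R + 1) (by omega) hR1m).mpr (by omega)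
        refine lt_of_lt_of_le this ?_
        have hm0 : (0 : ℝ) < (m : ℝ) := by exact_mod_cast (by omega : 0 < m)
        apply div_le_div_of_nonneg_right ?_ hm0.le
        push_cast
        nlinarith
      have hmem2 : R + 1 ∈ (Finset.Icc 1 m).filter
          (fun i => orderStat C i < (i : ℝ) * α / (m : ℝ)) := by
        rw [Finset.mem_filter, Finset.mem_Icc]
        exact ⟨⟨by omega, hR1m⟩, hos⟩
      have hle : R + 1 ≤ rBH α C := Finset.le_sup (f := id) hmem2
      omega

lemma sort_filter (C : Multiset ℝ) (t : ℝ) :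
    (C.filter (fun p => p < t)).sort (· ≤ ·)
      = (C.sort (· ≤ ·)).filter (fun p => decide (p < t)) := by
  apply List.Perm.eq_of_pairwise' (Multiset.pairwise_sort _ _)
    ((Multiset.pairwise_sort C (· ≤ ·)).filter _) ?_
  rw [← Multiset.coe_eq_coe, Multiset.sort_eq]
  conv_lhs => rw [← Multiset.sort_eq C (· ≤ ·)]
  rfl

lemma orderStat_filter (C : Multiset ℝ) (t : ℝ) (i : ℕ)
    (h1 : 1 ≤ i) (h2 : i ≤ countBelow C t) :
    orderStat (C.filter (fun p => p < t)) i = orderStat C i := by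
  unfold orderStat
  rw [sort_filter, sorted_filter_eq_take _ (Multiset.pairwise_sort _ _) t]
  have hc : (C.sort (· ≤ ·)).countP (fun p => decide (p < t)) = countBelow C t :=
    (countBelow_eq_countP C t).symm
  have hlen : countBelow C t ≤ (C.sort (· ≤ ·)).length := by
    rw [Multiset.length_sort]; exact countBelow_le_card C t
  rw [List.getD_eq_getElem _ _ (by rw [List.length_take, hc]; omega),
      List.getD_eq_getElem _ _ (by omega), List.getElem_take]

/-- Two-stage screening preserves the BH result (basis of the dependence
correction of Section 5.1): with `0 < α* ≤ α < 1`, `R = r_BH(α)` and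
`T = {p ∈ C : p < R·α/m}` the multiset of p-values selected at level `α` (so `|T| = R`),
the step-up search on `T` with thresholds relative to the full count `m` equals
`r_BH(α*)`, and `{p ∈ T : p < r_BH(α*)·α*/m}` equals the BH rejection set of `C` at
level `α*`. -/
theorem two_stage_screening_preserves_BH
    (C : Multiset ℝ) (m : ℕ) (hm : m = C.card)
    (hC : ∀ p ∈ C, 0 ≤ p ∧ p ≤ 1)
    (α αs : ℝ) (h0 : 0 < αs) (h1 : αs ≤ α) (h2 : α < 1)
    (R : ℕ) (hR : R = rBH α C)
    (T : Multiset ℝ) (hT : T = C.filter (fun p => p < (R : ℝ) * α / (m : ℝ))) :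
    T.card = R ∧
    ((Finset.Icc 1 R).filter
        (fun i => orderStat T i < (i : ℝ) * αs / (m : ℝ))).sup id = rBH αs C ∧
    T.filter (fun p => p < (rBH αs C : ℝ) * αs / (m : ℝ))
      = C.filter (fun p => p < (rBH αs C : ℝ) * αs / (m : ℝ)) := by
  subst hm hR hT
  set m := C.card with hmdef
  set R := rBH α C with hRdef
  set Rs := rBH αs C with hRsdef
  have hα : 0 < α := lt_of_lt_of_le h0 h1
  have hnn : ∀ p ∈ C, 0 ≤ p := fun p hp => (hC p hp).1
  have hcb : countBelow C ((R : ℝ) * α / (m : ℝ)) = R := countBelow_rBH C α hα hnn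
  have hRm : R ≤ m := rBH_le_card α C
  have hcard : (C.filter (fun p => p < (R : ℝ) * α / (m : ℝ))).card = R := hcb
  refine ⟨hcard, ?_, ?_⟩
  · -- step-up search on T equals rBH αs C
    have hRsR : Rs ≤ R := by
      apply Finset.sup_le
      intro j hj
      rw [Finset.mem_filter, Finset.mem_Icc] at hj
      obtain ⟨⟨hj1, hjm⟩, hjc⟩ := hj
      have hm0 : (0 : ℝ) < (m : ℝ) := by exact_mod_cast (by omega : 0 < m)
      have hjc' : orderStat C j < (j : ℝ) * α / (m : ℝ) := by
        refine lt_of_lt_of_le hjc ?_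
        apply div_le_div_of_nonneg_right ?_ hm0.le
        exact mul_le_mul_of_nonneg_left h1 (Nat.cast_nonneg j)
      exact Finset.le_sup (f := id)
        (Finset.mem_filter.mpr ⟨Finset.mem_Icc.mpr ⟨hj1, hjm⟩, hjc'⟩)
    have hOSeq : ∀ i : ℕ, 1 ≤ i → i ≤ R →
        orderStat (C.filter (fun p => p < (R : ℝ) * α / (m : ℝ))) i = orderStat C i := by
      intro i hi1 hi2
      exact orderStat_filter C _ i hi1 (by omega)
    have hsets : (Finset.Icc 1 R).filter
        (fun i => orderStat (C.filter (fun p => p < (R : ℝ) * α / (m : ℝ))) i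
          < (i : ℝ) * αs / (m : ℝ))
        = (Finset.Icc 1 m).filter
        (fun i => orderStat C i < (i : ℝ) * αs / (m : ℝ)) := by
      ext j
      simp only [Finset.mem_filter, Finset.mem_Icc]
      constructor
      · rintro ⟨⟨hj1, hjR⟩, hjc⟩
        rw [hOSeq j hj1 hjR] at hjc
        exact ⟨⟨hj1, by omega⟩, hjc⟩
      · rintro ⟨⟨hj1, hjm⟩, hjc⟩
        have hjRs : j ≤ Rs := Finset.le_sup (f := id)
          (Finset.mem_filter.mpr ⟨Finset.mem_Icc.mpr ⟨hj1, hjm⟩, hjc⟩)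
        have hjR : j ≤ R := le_trans hjRs hRsR
        rw [hOSeq j hj1 hjR]
        exact ⟨⟨hj1, hjR⟩, hjc⟩
    rw [hsets]
    rfl
  · -- rejection sets coincide
    have hRsR : Rs ≤ R := by
      apply Finset.sup_le
      intro j hj
      rw [Finset.mem_filter, Finset.mem_Icc] at hj
      obtain ⟨⟨hj1, hjm⟩, hjc⟩ := hj
      have hm0 : (0 : ℝ) < (m : ℝ) := by exact_mod_cast (by omega : 0 < m)
      have hjc' : orderStat C j < (j : ℝ) * α / (m : ℝ) := by
        refine lt_of_lt_of_le hjc ?_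
        apply div_le_div_of_nonneg_right ?_ hm0.le
        exact mul_le_mul_of_nonneg_left h1 (Nat.cast_nonneg j)
      exact Finset.le_sup (f := id)
        (Finset.mem_filter.mpr ⟨Finset.mem_Icc.mpr ⟨hj1, hjm⟩, hjc'⟩)
    have hthr : (Rs : ℝ) * αs / (m : ℝ) ≤ (R : ℝ) * α / (m : ℝ) := by
      apply div_le_div_of_nonneg_right ?_ (Nat.cast_nonneg m)
      apply mul_le_mul (by exact_mod_cast hRsR) h1 h0.le (Nat.cast_nonneg R)
    rw [Multiset.filter_filter]
    apply Multiset.filter_congr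
    intro p hp
    constructor
    · exact fun h => h.1
    · exact fun h => ⟨h, lt_of_lt_of_le h hthr⟩
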